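/- Exact reformulation of the expected quadratic penalty (Appendix A): let Ω be a finite set with probability weights p : Ω → ℝ, p_ω ≥ 0, ∑_{ω∈Ω} p_ω = 1, let S : Ω → ℝ^{M×M}, B ∈ ℝ^{N×M}, let D ∈ ℝ^{N×N} be symmetric, let x_0, d ∈ ℝ^N, u ∈ ℝ^M, and T ≥ 1. Write E[S] = ∑_{ω∈Ω} p_ω S(ω) and E[SᵀBᵀDBS] = ∑_{ω∈Ω} p_ω S(ω)ᵀ Bᵀ D B S(ω). Then ∑_{(ω_1,…,ω_T) ∈ Ω^T} (∏_{t=1}^{T} p_{ω_t}) · ‖x_0 + ∑_{t=0}^{T-1} B S(ω_{t+1}) u − d‖²_D = uᵀ ( T·E[SᵀBᵀDBS] + T(T−1)·E[S]ᵀ Bᵀ D B E[S] ) u + 2T·(x_0 − d)ᵀ D B E[S] u + (x_0 − d)ᵀ D (x_0 − d). -/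

import Mathlib

open Matrix

section helpers

variable {Ω : Type*} [Fintype Ω]

/-- product-form sum over tuples -/
lemma sum_tuple_prod {T : ℕ} (h : Fin T → Ω → ℝ) :
    ∑ ω : Fin T → Ω, ∏ t, h t (ω t) = ∏ t, ∑ x, h t x := by
  rw [Finset.prod_univ_sum, Fintype.piFinset_univ]

lemma sum_tuple_one {T : ℕ} (p : Ω → ℝ) (hp1 : ∑ ω, p ω = 1) :
    ∑ ω : Fin T → Ω, ∏ t, p (ω t) = 1 := by
  rw [sum_tuple_prod (fun _ x => p x)]
  simp [hp1]

lemma sum_tuple_single {T : ℕ} (p : Ω → ℝ) (hp1 : ∑ ω, p ω = 1)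
    (t : Fin T) (f : Ω → ℝ) :
    ∑ ω : Fin T → Ω, (∏ s, p (ω s)) * f (ω t) = ∑ x, p x * f x := by
  have key : ∀ ω : Fin T → Ω, (∏ s, p (ω s)) * f (ω t)
      = ∏ s, (p (ω s) * if s = t then f (ω s) else 1) := by
    intro ω
    rw [Finset.prod_mul_distrib, Finset.prod_ite_eq']
    simp
  simp_rw [key]
  rw [sum_tuple_prod (fun s x => p x * if s = t then f x else 1)]
  have : ∀ s : Fin T, (∑ x, p x * if s = t then f x else 1)
      = if s = t then ∑ x, p x * f x else 1 := by
    intro s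
    by_cases h : s = t <;> simp [h, hp1]
  simp_rw [this]
  rw [Finset.prod_ite_eq']
  simp

lemma sum_tuple_pair {T : ℕ} (p : Ω → ℝ) (hp1 : ∑ ω, p ω = 1)
    {t t' : Fin T} (htt : t ≠ t') (f g : Ω → ℝ) :
    ∑ ω : Fin T → Ω, (∏ s, p (ω s)) * (f (ω t) * g (ω t'))
      = (∑ x, p x * f x) * (∑ x, p x * g x) := by
  have key : ∀ ω : Fin T → Ω, (∏ s, p (ω s)) * (f (ω t) * g (ω t'))
      = ∏ s, (p (ω s) * ((if s = t then f (ω s) else 1) *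
          (if s = t' then g (ω s) else 1))) := by
    intro ω
    rw [Finset.prod_mul_distrib, Finset.prod_mul_distrib,
      Finset.prod_ite_eq', Finset.prod_ite_eq']
    simp
  simp_rw [key]
  rw [sum_tuple_prod (fun s y => p y * ((if s = t then f y else 1) *
    if s = t' then g y else 1))]
  have : ∀ s : Fin T, (∑ x, p x * ((if s = t then f x else 1) *
      (if s = t' then g x else 1)))
      = (if s = t then ∑ x, p x * f x else 1) *
        (if s = t' then ∑ x, p x * g x else 1) := by
    intro s
    by_cases h : s = t
    · subst h
      simp [Ne.symm, htt, hp1]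
    · by_cases h' : s = t' <;> simp [h, h', hp1, Ne.symm htt]
  simp_rw [this]
  rw [Finset.prod_mul_distrib, Finset.prod_ite_eq', Finset.prod_ite_eq']
  simp

lemma dp_sum_right {n ι : Type*} [Fintype n] [Fintype ι]
    (v : n → ℝ) (f : ι → n → ℝ) :
    v ⬝ᵥ (∑ i, f i) = ∑ i, v ⬝ᵥ f i := by
  simp [dotProduct, Finset.mul_sum]
  exact Finset.sum_comm

lemma dp_sum_left {n ι : Type*} [Fintype n] [Fintype ι]
    (v : n → ℝ) (f : ι → n → ℝ) :
    (∑ i, f i) ⬝ᵥ v = ∑ i, f i ⬝ᵥ v := by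
  simp [dotProduct, Finset.sum_mul]
  exact Finset.sum_comm

lemma mulVec_sum' {m n ι : Type*} [Fintype n] [Fintype ι]
    (A : Matrix m n ℝ) (f : ι → n → ℝ) :
    A *ᵥ (∑ i, f i) = ∑ i, A *ᵥ f i := by
  funext j
  simp [Matrix.mulVec, dp_sum_right]

lemma sum_mulVec' {m n ι : Type*} [Fintype n] [Fintype ι]
    (f : ι → Matrix m n ℝ) (u : n → ℝ) :
    (∑ i, f i) *ᵥ u = ∑ i, f i *ᵥ u := by
  funext j
  simp only [Matrix.mulVec, dotProduct, Finset.sum_apply, Matrix.sum_apply,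
    Finset.sum_mul]
  exact Finset.sum_comm

end helpers

set_option maxHeartbeats 1000000 in
theorem stmt_13 {N M T : ℕ} (hT : 1 ≤ T) {Ω : Type*} [Fintype Ω]
    (p : Ω → ℝ) (hp0 : ∀ ω, 0 ≤ p ω) (hp1 : ∑ ω, p ω = 1)
    (S : Ω → Matrix (Fin M) (Fin M) ℝ)
    (B : Matrix (Fin N) (Fin M) ℝ)
    (D : Matrix (Fin N) (Fin N) ℝ) (hD : D.IsSymm)
    (x0 d : Fin N → ℝ) (u : Fin M → ℝ) :
    (∑ ω : Fin T → Ω, (∏ t, p (ω t)) *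
      ((x0 + ∑ t, (B * S (ω t)).mulVec u - d) ⬝ᵥ
        D.mulVec (x0 + ∑ t, (B * S (ω t)).mulVec u - d)))
    = u ⬝ᵥ (((T : ℝ) • ∑ ω, p ω • ((S ω)ᵀ * Bᵀ * D * B * S ω)
          + ((T : ℝ) * ((T : ℝ) - 1)) •
            ((∑ ω, p ω • S ω)ᵀ * Bᵀ * D * B * (∑ ω, p ω • S ω))).mulVec u)
      + 2 * (T : ℝ) * ((x0 - d) ⬝ᵥ (D * B * (∑ ω, p ω • S ω)).mulVec u)
      + (x0 - d) ⬝ᵥ D.mulVec (x0 - d) := by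
  classical
  set a : Fin N → ℝ := x0 - d with ha
  set v : Ω → Fin N → ℝ := fun x => (B * S x) *ᵥ u with hv
  -- symmetrized dot product identity
  have hsym : ∀ s w : Fin N → ℝ, s ⬝ᵥ D *ᵥ w = w ⬝ᵥ D *ᵥ s := by
    intro s w
    rw [Matrix.dotProduct_mulVec, ← Matrix.mulVec_transpose, hD.eq,
      dotProduct_comm]
  -- scalar statistics
  set Ed : ℝ := ∑ x, p x * (v x ⬝ᵥ D *ᵥ v x) with hEd
  set Ev : Fin N → ℝ := ∑ x, p x • v x with hEv
  set Eφ : ℝ := ∑ x, p x * (a ⬝ᵥ D *ᵥ v x) with hEφ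
  set C0 : ℝ := a ⬝ᵥ D *ᵥ a with hC0
  -- LHS reduction
  have hLHS : (∑ ω : Fin T → Ω, (∏ t, p (ω t)) *
      ((x0 + ∑ t, (B * S (ω t)) *ᵥ u - d) ⬝ᵥ
        D *ᵥ (x0 + ∑ t, (B * S (ω t)) *ᵥ u - d)))
      = (T : ℝ) * Ed + (T : ℝ) * ((T : ℝ) - 1) * (Ev ⬝ᵥ D *ᵥ Ev)
        + 2 * (T : ℝ) * Eφ + C0 := by
    have hvecform : ∀ ω : Fin T → Ω,
        x0 + (∑ t, (B * S (ω t)) *ᵥ u) - d = a + ∑ t, v (ω t) := by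
      intro ω
      rw [add_sub_right_comm]
    have hexpand : ∀ ω : Fin T → Ω,
        (x0 + ∑ t, (B * S (ω t)) *ᵥ u - d) ⬝ᵥ
          D *ᵥ (x0 + ∑ t, (B * S (ω t)) *ᵥ u - d)
        = C0 + 2 * (∑ t, a ⬝ᵥ D *ᵥ v (ω t))
          + ∑ t, ∑ t', (v (ω t) ⬝ᵥ D *ᵥ v (ω t')) := by
      intro ω
      rw [hvecform ω]
      set s : Fin N → ℝ := ∑ t, v (ω t) with hs
      have h1 : (a + s) ⬝ᵥ D *ᵥ (a + s)
          = C0 + 2 * (a ⬝ᵥ D *ᵥ s) + s ⬝ᵥ D *ᵥ s := by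
        rw [Matrix.mulVec_add, dotProduct_add, add_dotProduct,
          add_dotProduct, hsym s a]
        ring
      rw [h1, hs]
      congr 2
      · rw [mulVec_sum', dp_sum_right]
      · rw [mulVec_sum', dp_sum_right]
        simp_rw [dp_sum_left]
        exact Finset.sum_comm
    calc (∑ ω : Fin T → Ω, (∏ t, p (ω t)) *
        ((x0 + ∑ t, (B * S (ω t)) *ᵥ u - d) ⬝ᵥ
          D *ᵥ (x0 + ∑ t, (B * S (ω t)) *ᵥ u - d)))
        = ∑ ω : Fin T → Ω, ((∏ t, p (ω t)) * C0
          + 2 * ∑ t, (∏ s, p (ω s)) * (a ⬝ᵥ D *ᵥ v (ω t))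
          + ∑ t, ∑ t', (∏ s, p (ω s)) * (v (ω t) ⬝ᵥ D *ᵥ v (ω t'))) := by
          refine Finset.sum_congr rfl fun ω _ => ?_
          rw [hexpand ω]
          have hring : ∀ c x y : ℝ, c * (C0 + 2 * x + y)
              = c * C0 + 2 * (c * x) + c * y := by intros; ring
          rw [hring]
          simp_rw [Finset.mul_sum]
      _ = (∑ ω : Fin T → Ω, (∏ t, p (ω t))) * C0
          + 2 * ∑ t, ∑ ω : Fin T → Ω, (∏ s, p (ω s)) * (a ⬝ᵥ D *ᵥ v (ω t))
          + ∑ t, ∑ t', ∑ ω : Fin T → Ω,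
              (∏ s, p (ω s)) * (v (ω t) ⬝ᵥ D *ᵥ v (ω t')) := by
          rw [Finset.sum_add_distrib, Finset.sum_add_distrib]
          congr 1
          · congr 1
            · rw [← Finset.sum_mul]
            · rw [← Finset.mul_sum, Finset.sum_comm]
          · rw [Finset.sum_comm]
            exact Finset.sum_congr rfl fun t _ => Finset.sum_comm
      _ = C0 + 2 * ((T : ℝ) * Eφ)
          + ((T : ℝ) * Ed + (T : ℝ) * ((T : ℝ) - 1) * (Ev ⬝ᵥ D *ᵥ Ev)) := by
          congr 1
          · congr 1
            · rw [sum_tuple_one p hp1, one_mul]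
            · congr 1
              have : ∀ t : Fin T,
                  (∑ ω : Fin T → Ω, (∏ s, p (ω s)) * (a ⬝ᵥ D *ᵥ v (ω t))) = Eφ :=
                fun t => sum_tuple_single p hp1 t (fun x => a ⬝ᵥ D *ᵥ v x)
              simp_rw [this]
              rw [Finset.sum_const, Finset.card_univ, Fintype.card_fin,
                nsmul_eq_mul]
          · -- quadratic part
            have hdiag : ∀ t : Fin T,
                (∑ ω : Fin T → Ω, (∏ s, p (ω s)) * (v (ω t) ⬝ᵥ D *ᵥ v (ω t))) = Ed :=
              fun t => sum_tuple_single p hp1 t (fun x => v x ⬝ᵥ D *ᵥ v x)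
            have hoff : ∀ t t' : Fin T, t ≠ t' →
                (∑ ω : Fin T → Ω, (∏ s, p (ω s)) * (v (ω t) ⬝ᵥ D *ᵥ v (ω t')))
                  = Ev ⬝ᵥ D *ᵥ Ev := by
              intro t t' htt
              have hsplit : ∀ x y : Ω, v x ⬝ᵥ D *ᵥ v y
                  = ∑ i, v x i * (D *ᵥ v y) i := fun _ _ => rfl
              calc (∑ ω : Fin T → Ω, (∏ s, p (ω s)) * (v (ω t) ⬝ᵥ D *ᵥ v (ω t')))
                  = ∑ i, ∑ ω : Fin T → Ω, (∏ s, p (ω s)) *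
                      ((fun x => v x i) (ω t) * (fun y => (D *ᵥ v y) i) (ω t')) := by
                    rw [Finset.sum_comm]
                    refine Finset.sum_congr rfl fun ω _ => ?_
                    rw [hsplit, Finset.mul_sum]
                _ = ∑ i, (∑ x, p x * v x i) * (∑ y, p y * (D *ᵥ v y) i) := by
                    refine Finset.sum_congr rfl fun i _ => ?_
                    exact sum_tuple_pair p hp1 htt (fun x => v x i)
                      (fun y => (D *ᵥ v y) i)
                _ = Ev ⬝ᵥ D *ᵥ Ev := by
                    have h1 : ∀ i, (∑ x, p x * v x i) = Ev i := by
                      intro i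
                      rw [hEv]
                      simp [Finset.sum_apply]
                    have h2 : ∀ i, (∑ y, p y * (D *ᵥ v y) i) = (D *ᵥ Ev) i := by
                      intro i
                      rw [hEv, mulVec_sum']
                      simp [Finset.sum_apply, Matrix.mulVec_smul]
                    simp_rw [h1, h2]
                    rfl
            calc (∑ t : Fin T, ∑ t' : Fin T, ∑ ω : Fin T → Ω,
                  (∏ s, p (ω s)) * (v (ω t) ⬝ᵥ D *ᵥ v (ω t')))
                = ∑ t : Fin T, ∑ t' : Fin T,
                    (if t = t' then Ed else Ev ⬝ᵥ D *ᵥ Ev) := by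
                  refine Finset.sum_congr rfl fun t _ => Finset.sum_congr rfl
                    fun t' _ => ?_
                  by_cases h : t = t'
                  · subst h; simp [hdiag t]
                  · simp [h, hoff t t' h]
              _ = (T : ℝ) * Ed + (T : ℝ) * ((T : ℝ) - 1) * (Ev ⬝ᵥ D *ᵥ Ev) := by
                  have : ∀ t : Fin T, (∑ t' : Fin T,
                      (if t = t' then Ed else Ev ⬝ᵥ D *ᵥ Ev))
                      = Ed + ((T : ℝ) - 1) * (Ev ⬝ᵥ D *ᵥ Ev) := by
                    intro t
                    have hsp : ∀ t' : Fin T, (if t = t' then Ed else Ev ⬝ᵥ D *ᵥ Ev)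
                        = (Ev ⬝ᵥ D *ᵥ Ev) + (if t = t' then Ed - Ev ⬝ᵥ D *ᵥ Ev else 0) := by
                      intro t'
                      by_cases h : t = t' <;> simp [h]
                    simp_rw [hsp]
                    rw [Finset.sum_add_distrib, Finset.sum_const, Finset.sum_ite_eq,
                      Finset.card_univ, Fintype.card_fin]
                    simp [nsmul_eq_mul]
                    ring
                  simp_rw [this]
                  rw [Finset.sum_const, Finset.card_univ, Fintype.card_fin,
                    nsmul_eq_mul]
                  ring
    ring
  rw [hLHS]
  have hquad : ∀ (A : Matrix (Fin N) (Fin M) ℝ) (C : Matrix (Fin N) (Fin N) ℝ),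
      u ⬝ᵥ (Aᵀ * C * A) *ᵥ u = (A *ᵥ u) ⬝ᵥ C *ᵥ (A *ᵥ u) := by
    intro A C
    rw [← Matrix.mulVec_mulVec, ← Matrix.mulVec_mulVec, Matrix.dotProduct_mulVec,
      Matrix.vecMul_transpose]
  have hES : (B * ∑ ω, p ω • S ω) *ᵥ u = Ev := by
    rw [Matrix.mul_sum]
    simp_rw [Matrix.mul_smul]
    rw [sum_mulVec']
    simp_rw [Matrix.smul_mulVec]
    rfl
  have h1 : u ⬝ᵥ (∑ ω, p ω • ((S ω)ᵀ * Bᵀ * D * B * S ω)) *ᵥ u = Ed := by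
    rw [sum_mulVec', dp_sum_right, hEd]
    refine Finset.sum_congr rfl fun x _ => ?_
    rw [Matrix.smul_mulVec, dotProduct_smul, smul_eq_mul]
    congr 1
    have hA : (S x)ᵀ * Bᵀ * D * B * S x = (B * S x)ᵀ * D * (B * S x) := by
      simp [Matrix.transpose_mul, Matrix.mul_assoc]
    rw [hA, hquad]
  have h2 : u ⬝ᵥ ((∑ ω, p ω • S ω)ᵀ * Bᵀ * D * B * (∑ ω, p ω • S ω)) *ᵥ u
      = Ev ⬝ᵥ D *ᵥ Ev := by
    have hA : (∑ ω, p ω • S ω)ᵀ * Bᵀ * D * B * (∑ ω, p ω • S ω)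
        = (B * ∑ ω, p ω • S ω)ᵀ * D * (B * ∑ ω, p ω • S ω) := by
      simp [Matrix.transpose_mul, Matrix.mul_assoc]
    rw [hA, hquad, hES]
  have h3 : a ⬝ᵥ (D * B * (∑ ω, p ω • S ω)) *ᵥ u = Eφ := by
    rw [Matrix.mul_assoc, ← Matrix.mulVec_mulVec, hES, hEφ, hEv]
    rw [mulVec_sum', dp_sum_right]
    refine Finset.sum_congr rfl fun x _ => ?_
    rw [Matrix.mulVec_smul, dotProduct_smul, smul_eq_mul]
  rw [Matrix.add_mulVec, Matrix.smul_mulVec, Matrix.smul_mulVec,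
    dotProduct_add, dotProduct_smul, dotProduct_smul, h1, h2, h3,
    smul_eq_mul, smul_eq_mul]
  try ring
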